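/- Let γ ≥ 0 with 2γ < N, and let x_1, …, x_T ∈ D. If for every t ∈ {1, …, T} the bound ∑_{i=1}^N log(1 + σ_0^{-2} σ_{g,i−1}²(x_t)) ≤ 2γ holds, then the total posterior variance over the T points satisfies ∑_{t=1}^T σ_{g,N}²(x_t) ≤ 2 T γ σ_0² / (N − 2γ). -/

import Mathlib

open Matrix

/-- The `n × n` kernel matrix `K_n = [k_g(x_i, x_j)]` built from the first `n`
points of the sequence `xs` (zero-indexed: `xs 0 = x_1`). -/
noncomputable def kerMat {D : Type*} (k_g : D → D → ℝ) (xs : ℕ → D) (n : ℕ) :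
    Matrix (Fin n) (Fin n) ℝ :=
  Matrix.of fun i j => k_g (xs i) (xs j)

/-- The kernel vector `k_n(x) = [k_g(x_i, x)]_{i=1}^n`. -/
noncomputable def kerVec {D : Type*} (k_g : D → D → ℝ) (xs : ℕ → D) (n : ℕ) (y : D) :
    Fin n → ℝ :=
  fun i => k_g (xs i) y

/-- The posterior variance
`σ_n²(x) = k_g(x,x) − k_n(x)ᵀ (K_n + σ² I_n)⁻¹ k_n(x)`;
for `n = 0` this is `k_g(x,x)`. -/
noncomputable def postVar {D : Type*} (k_g : D → D → ℝ) (xs : ℕ → D) (σ0sq : ℝ)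
    (n : ℕ) (y : D) : ℝ :=
  k_g y y -
    kerVec k_g xs n y ⬝ᵥ
      ((kerMat k_g xs n + σ0sq • (1 : Matrix (Fin n) (Fin n) ℝ))⁻¹ *ᵥ kerVec k_g xs n y)

/-! ### Auxiliary lemmas -/

/-- The quadratic functional whose minimum over `w` is the posterior variance. -/
noncomputable def quadF {D : Type*} (k_g : D → D → ℝ) (xs : ℕ → D) (σ0sq : ℝ)
    (n : ℕ) (y : D) (w : Fin n → ℝ) : ℝ :=
  k_g y y - 2 * (w ⬝ᵥ kerVec k_g xs n y) +
    w ⬝ᵥ ((kerMat k_g xs n + σ0sq • (1 : Matrix (Fin n) (Fin n) ℝ)) *ᵥ w)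

lemma Mpos {D : Type*} (k_g : D → D → ℝ) (xs : ℕ → D) (σ0sq : ℝ)
    (hpsd : ∀ (n : ℕ) (z : Fin n → D),
      (Matrix.of fun i j => k_g (z i) (z j)).PosSemidef)
    (hσ0sq : 0 < σ0sq) (n : ℕ) :
    (kerMat k_g xs n + σ0sq • (1 : Matrix (Fin n) (Fin n) ℝ)).PosDef := by
  have h1 : (σ0sq • (1 : Matrix (Fin n) (Fin n) ℝ)).PosDef := by
    rw [Matrix.smul_one_eq_diagonal]
    exact Matrix.PosDef.diagonal fun _ => hσ0sq
  exact Matrix.PosDef.posSemidef_add (hpsd n fun i => xs i) h1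

lemma quadF_nonneg {D : Type*} (k_g : D → D → ℝ) (xs : ℕ → D) (σ0sq : ℝ)
    (hsymm : ∀ a b : D, k_g a b = k_g b a)
    (hpsd : ∀ (n : ℕ) (z : Fin n → D),
      (Matrix.of fun i j => k_g (z i) (z j)).PosSemidef)
    (hσ0sq : 0 ≤ σ0sq) (n : ℕ) (y : D) (w : Fin n → ℝ) :
    0 ≤ quadF k_g xs σ0sq n y w := by
  set z : Fin (n + 1) → D := Fin.cons y (fun i => xs i) with hz
  set v : Fin (n + 1) → ℝ := Fin.cons 1 (fun i => -w i) with hv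
  have h0 := (hpsd (n + 1) z).dotProduct_mulVec_nonneg v
  rw [star_trivial] at h0
  have hexp : v ⬝ᵥ ((Matrix.of fun i j => k_g (z i) (z j)) *ᵥ v)
      = k_g y y - 2 * (w ⬝ᵥ kerVec k_g xs n y) + w ⬝ᵥ (kerMat k_g xs n *ᵥ w) := by
    simp only [dotProduct, Matrix.mulVec, Matrix.of_apply, hz, hv,
      Fin.sum_univ_succ, Fin.cons_zero, Fin.cons_succ, kerVec, kerMat, Matrix.of_apply]
    simp only [Finset.mul_sum, Finset.sum_mul, neg_mul, mul_neg, Finset.sum_neg_distrib,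
      one_mul, mul_one]
    have hs : ∀ j : Fin n, k_g y (xs j) = k_g (xs j) y := fun j => hsymm _ _
    simp only [hs]
    have hinner : ∀ x : Fin n,
        w x * (k_g (xs x) y - ∑ x1 : Fin n, k_g (xs x) (xs x1) * w x1)
        = w x * k_g (xs x) y - ∑ x1 : Fin n, w x * k_g (xs x) (xs x1) * w x1 := by
      intro x
      rw [mul_sub, Finset.mul_sum]
      ring_nf
    simp only [← sub_eq_add_neg]
    simp only [hinner, Finset.sum_sub_distrib]
    simp only [mul_assoc]
    have h2 : ∑ x : Fin n, 2 * (w x * k_g (xs x) y)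
        = (∑ x : Fin n, k_g (xs x) y * w x) + ∑ x : Fin n, w x * k_g (xs x) y := by
      rw [← Finset.sum_add_distrib]
      exact Finset.sum_congr rfl fun i _ => by ring
    rw [h2]
    ring
  have hq : quadF k_g xs σ0sq n y w
      = v ⬝ᵥ ((Matrix.of fun i j => k_g (z i) (z j)) *ᵥ v) + σ0sq * (w ⬝ᵥ w) := by
    rw [hexp]
    simp only [quadF, Matrix.add_mulVec, dotProduct_add, Matrix.smul_mulVec,
      Matrix.one_mulVec, dotProduct_smul, smul_eq_mul]
    ring
  rw [hq]
  have : 0 ≤ w ⬝ᵥ w := by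
    simp only [dotProduct]
    exact Finset.sum_nonneg fun i _ => mul_self_nonneg _
  positivity

section aux2
variable {D : Type*} (k_g : D → D → ℝ) (xs : ℕ → D) (σ0sq : ℝ)
  (hpsd : ∀ (n : ℕ) (z : Fin n → D),
      (Matrix.of fun i j => k_g (z i) (z j)).PosSemidef)
  (hσ0sq : 0 < σ0sq)

include hpsd hσ0sq

lemma quadF_eq_postVar (n : ℕ) (y : D) :
    quadF k_g xs σ0sq n y
      ((kerMat k_g xs n + σ0sq • (1 : Matrix (Fin n) (Fin n) ℝ))⁻¹ *ᵥ kerVec k_g xs n y)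
    = postVar k_g xs σ0sq n y := by
  set M := kerMat k_g xs n + σ0sq • (1 : Matrix (Fin n) (Fin n) ℝ) with hMdef
  set k := kerVec k_g xs n y with hkdef
  have hM := Mpos k_g xs σ0sq hpsd hσ0sq n
  rw [← hMdef] at hM
  have hMk : M *ᵥ (M⁻¹ *ᵥ k) = k := by
    rw [Matrix.mulVec_mulVec,
      Matrix.mul_nonsing_inv _ ((Matrix.isUnit_iff_isUnit_det _).1 hM.isUnit),
      Matrix.one_mulVec]
  have hdot : (M⁻¹ *ᵥ k) ⬝ᵥ k = k ⬝ᵥ (M⁻¹ *ᵥ k) := dotProduct_comm _ _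
  simp only [quadF, postVar, ← hMdef, ← hkdef, hMk]
  rw [hdot]
  ring

lemma postVar_le_quadF (n : ℕ) (y : D) (w : Fin n → ℝ) :
    postVar k_g xs σ0sq n y ≤ quadF k_g xs σ0sq n y w := by
  set M := kerMat k_g xs n + σ0sq • (1 : Matrix (Fin n) (Fin n) ℝ) with hMdef
  set k := kerVec k_g xs n y with hkdef
  set ws := M⁻¹ *ᵥ k with hwsdef
  have hM := Mpos k_g xs σ0sq hpsd hσ0sq n
  rw [← hMdef] at hM
  have hMk : M *ᵥ ws = k := by
    rw [hwsdef, Matrix.mulVec_mulVec,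
      Matrix.mul_nonsing_inv _ ((Matrix.isUnit_iff_isUnit_det _).1 hM.isUnit),
      Matrix.one_mulVec]
  have hT : Mᵀ = M := by
    have := hM.isHermitian
    rwa [Matrix.IsHermitian, Matrix.conjTranspose_eq_transpose_of_trivial] at this
  have hA : ws ⬝ᵥ (M *ᵥ w) = w ⬝ᵥ k := by
    rw [Matrix.dotProduct_mulVec, ← Matrix.mulVec_transpose, hT, hMk,
      dotProduct_comm]
  have hB : ws ⬝ᵥ k = k ⬝ᵥ ws := dotProduct_comm _ _
  have h0 := hM.posSemidef.dotProduct_mulVec_nonneg (w - ws)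
  rw [star_trivial] at h0
  have key : quadF k_g xs σ0sq n y w - postVar k_g xs σ0sq n y
      = (w - ws) ⬝ᵥ (M *ᵥ (w - ws)) := by
    simp only [quadF, postVar, ← hMdef, ← hkdef, ← hwsdef, Matrix.mulVec_sub,
      dotProduct_sub, sub_dotProduct, hMk]
    rw [hA, hB]
    ring
  linarith

lemma postVar_succ_le (n : ℕ) (y : D) :
    postVar k_g xs σ0sq (n + 1) y ≤ postVar k_g xs σ0sq n y := by
  set ws := (kerMat k_g xs n + σ0sq • (1 : Matrix (Fin n) (Fin n) ℝ))⁻¹ *ᵥ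
      kerVec k_g xs n y with hwsdef
  have h1 := postVar_le_quadF k_g xs σ0sq hpsd hσ0sq (n + 1) y (Fin.snoc ws 0)
  have hA : (Fin.snoc ws 0 : Fin (n+1) → ℝ) ⬝ᵥ kerVec k_g xs (n+1) y
      = ws ⬝ᵥ kerVec k_g xs n y := by
    simp [dotProduct, Fin.sum_univ_castSucc, kerVec]
  have hB : (Fin.snoc ws 0 : Fin (n+1) → ℝ) ⬝ᵥ
        ((kerMat k_g xs (n+1) + σ0sq • (1 : Matrix (Fin (n+1)) (Fin (n+1)) ℝ)) *ᵥ
          (Fin.snoc ws 0 : Fin (n+1) → ℝ))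
      = ws ⬝ᵥ ((kerMat k_g xs n + σ0sq • (1 : Matrix (Fin n) (Fin n) ℝ)) *ᵥ ws) := by
    simp only [dotProduct, Matrix.mulVec, Matrix.add_apply, Matrix.smul_apply,
      Matrix.one_apply, kerMat, Matrix.of_apply, smul_eq_mul]
    rw [Fin.sum_univ_castSucc]
    simp only [Fin.snoc_castSucc, Fin.snoc_last, zero_mul, add_zero, Fin.coe_castSucc]
    refine (Finset.sum_congr rfl fun i _ => ?_)
    congr 1
    rw [Fin.sum_univ_castSucc]
    simp [Fin.castSucc_inj, dotProduct]
  have h2 : quadF k_g xs σ0sq (n+1) y (Fin.snoc ws 0) = quadF k_g xs σ0sq n y ws := by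
    simp only [quadF, hA, hB]
  rw [h2, hwsdef, quadF_eq_postVar k_g xs σ0sq hpsd hσ0sq n y] at h1
  exact h1

lemma postVar_anti {m n : ℕ} (h : m ≤ n) (y : D) :
    postVar k_g xs σ0sq n y ≤ postVar k_g xs σ0sq m y := by
  induction n, h using Nat.le_induction with
  | base => exact le_rfl
  | succ n hmn ih =>
    exact le_trans (postVar_succ_le k_g xs σ0sq hpsd hσ0sq n y) ih

end aux2

lemma postVar_nonneg {D : Type*} (k_g : D → D → ℝ) (xs : ℕ → D) (σ0sq : ℝ)
    (hsymm : ∀ a b : D, k_g a b = k_g b a)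
    (hpsd : ∀ (n : ℕ) (z : Fin n → D),
      (Matrix.of fun i j => k_g (z i) (z j)).PosSemidef)
    (hσ0sq : 0 < σ0sq) (n : ℕ) (y : D) :
    0 ≤ postVar k_g xs σ0sq n y := by
  rw [← quadF_eq_postVar k_g xs σ0sq hpsd hσ0sq n y]
  exact quadF_nonneg k_g xs σ0sq hsymm hpsd hσ0sq.le n y _

/-- Total posterior variance bound over `T` points: if for every `t`,
`∑_{i=1}^N log(1 + σ_0^{-2} σ_{g,i−1}²(x_t)) ≤ 2γ` with `2γ < N`, then
`∑_{t=1}^T σ_{g,N}²(x_t) ≤ 2 T γ σ_0² / (N − 2γ)`. -/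
theorem total_source_posterior_variance_bound {D : Type*} [Nonempty D]
    (k_g : D → D → ℝ)
    (hsymm : ∀ a b : D, k_g a b = k_g b a)
    (hpsd : ∀ (n : ℕ) (z : Fin n → D),
      (Matrix.of fun i j => k_g (z i) (z j)).PosSemidef)
    (σ0sq : ℝ) (hσ0sq : 0 < σ0sq)
    (x0 : ℕ → D) (N : ℕ)
    (γ : ℝ) (hγ : 0 ≤ γ) (hγN : 2 * γ < N)
    (T : ℕ) (xt : Fin T → D)
    (hsum : ∀ t : Fin T,
      ∑ i : Fin N, Real.log (1 + σ0sq⁻¹ * postVar k_g x0 σ0sq i (xt t)) ≤ 2 * γ) :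
    ∑ t : Fin T, postVar k_g x0 σ0sq N (xt t) ≤ 2 * T * γ * σ0sq / (N - 2 * γ) := by
  have hN : (0:ℝ) < N := lt_of_le_of_lt (by linarith) hγN
  set c : ℝ := 2 * γ * σ0sq / ((N:ℝ) - 2 * γ) with hc
  have hmain : ∀ t : Fin T, postVar k_g x0 σ0sq N (xt t) ≤ c := by
    intro t
    set p := postVar k_g x0 σ0sq N (xt t) with hp
    have hp0 : 0 ≤ p := postVar_nonneg k_g x0 σ0sq hsymm hpsd hσ0sq N (xt t)
    set u := σ0sq⁻¹ * p with hu
    have hu0 : 0 ≤ u := by positivity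
    have h1u : (0:ℝ) < 1 + u := by linarith
    have hlog : (N:ℝ) * Real.log (1 + u) ≤ 2 * γ := by
      calc (N:ℝ) * Real.log (1 + u) = ∑ _i : Fin N, Real.log (1 + u) := by
            simp [Finset.sum_const, nsmul_eq_mul]
        _ ≤ ∑ i : Fin N, Real.log (1 + σ0sq⁻¹ * postVar k_g x0 σ0sq i (xt t)) := by
            refine Finset.sum_le_sum fun i _ => ?_
            have hle : p ≤ postVar k_g x0 σ0sq i (xt t) :=
              postVar_anti k_g x0 σ0sq hpsd hσ0sq (le_of_lt i.isLt) (xt t)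
            have hmul : u ≤ σ0sq⁻¹ * postVar k_g x0 σ0sq i (xt t) := by
              rw [hu]
              exact mul_le_mul_of_nonneg_left hle (by positivity)
            exact (Real.log_le_log_iff h1u (by linarith)).2 (by linarith)
        _ ≤ 2 * γ := hsum t
    have hlb : u / (1 + u) ≤ Real.log (1 + u) := by
      have h := Real.log_le_sub_one_of_pos (x := (1 + u)⁻¹) (by positivity)
      rw [Real.log_inv] at h
      have heq : (1:ℝ) - (1 + u)⁻¹ = u / (1 + u) := by field_simp; ring
      linarith
    have h2 : (N:ℝ) * (u / (1 + u)) ≤ 2 * γ :=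
      le_trans (mul_le_mul_of_nonneg_left hlb hN.le) hlog
    have h3 : (N:ℝ) * u ≤ 2 * γ * (1 + u) := by
      have h4 := mul_le_mul_of_nonneg_right h2 h1u.le
      calc (N:ℝ) * u = (N:ℝ) * (u / (1 + u)) * (1 + u) := by field_simp
        _ ≤ 2 * γ * (1 + u) := h4
    have h5 : u ≤ 2 * γ / ((N:ℝ) - 2 * γ) := by
      rw [le_div_iff₀ (by linarith)]
      nlinarith
    have hpu : p = σ0sq * u := by
      rw [hu]
      field_simp
    rw [hpu, hc]
    calc σ0sq * u ≤ σ0sq * (2 * γ / ((N:ℝ) - 2 * γ)) :=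
          mul_le_mul_of_nonneg_left h5 hσ0sq.le
      _ = 2 * γ * σ0sq / ((N:ℝ) - 2 * γ) := by ring
  calc ∑ t : Fin T, postVar k_g x0 σ0sq N (xt t) ≤ ∑ _t : Fin T, c :=
        Finset.sum_le_sum fun t _ => hmain t
    _ = (T:ℝ) * c := by simp [Finset.sum_const, nsmul_eq_mul]
    _ = 2 * T * γ * σ0sq / ((N:ℝ) - 2 * γ) := by rw [hc]; ring
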